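/- Suppose the free BGW process is subcritical, i.e. $p_1 + R'(1) < 1$, where $R(v)=\sum_{k\ge2}p_kv^k$. Let $f(v) = \frac{p_0}{1-p_1} + \frac{R(v)}{R'(v)}$ for $v\ge 1$. Then $f(1) > 1$ and $f(v) < v$ for all sufficiently large $v$; hence the equation $f(v)=v$ has a solution $v_c \ge 1$. -/

import Mathlib

theorem stmt_6 (p : ℕ → ℝ) (R R' f : ℝ → ℝ)
    (hp : ∀ k, 0 ≤ p k) (hsum : HasSum p 1)
    (hp0 : 0 < p 0) (hp01 : p 0 + p 1 < 1)
    (hR : ∀ v : ℝ, HasSum (fun k : ℕ => p (k + 2) * v ^ (k + 2)) (R v))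
    (hR' : ∀ v : ℝ, HasSum (fun k : ℕ => (k + 2 : ℝ) * p (k + 2) * v ^ (k + 1)) (R' v))
    (hsub : p 1 + R' 1 < 1)
    (hf : ∀ v : ℝ, f v = p 0 / (1 - p 1) + R v / R' v) :
    1 < f 1 ∧ (∃ V : ℝ, ∀ v : ℝ, V ≤ v → f v < v) ∧
    ∃ vc : ℝ, 1 ≤ vc ∧ f vc = vc := by
  have h1p1 : 0 < 1 - p 1 := by linarith [hp 0]
  -- tail sum
  have htail : HasSum (fun k : ℕ => p (k + 2)) (1 - (p 0 + p 1)) := by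
    have h := (hasSum_nat_add_iff' (f := p) 2).2 hsum
    simpa [Finset.sum_range_succ] using h
  have hR1 : R 1 = 1 - (p 0 + p 1) := by
    have h1 : HasSum (fun k : ℕ => p (k + 2)) (R 1) := by simpa using hR 1
    exact h1.unique htail
  have hR1pos : 0 < R 1 := by rw [hR1]; linarith
  -- R' v ≥ R 1 for v ≥ 1
  have hR'ge : ∀ v : ℝ, 1 ≤ v → R 1 ≤ R' v := by
    intro v hv
    have h1 : HasSum (fun k : ℕ => p (k + 2)) (R 1) := by simpa using hR 1
    refine hasSum_le (fun k => ?_) h1 (hR' v)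
    have hvk : (1 : ℝ) ≤ v ^ (k + 1) := one_le_pow₀ hv
    have hk2 : p (k + 2) ≤ (k + 2 : ℝ) * p (k + 2) := by nlinarith [hp (k + 2)]
    calc p (k + 2) ≤ (k + 2 : ℝ) * p (k + 2) := hk2
      _ = (k + 2 : ℝ) * p (k + 2) * 1 := by ring
      _ ≤ (k + 2 : ℝ) * p (k + 2) * v ^ (k + 1) := by
          apply mul_le_mul_of_nonneg_left hvk
          have hpk := hp (k + 2); positivity
  have hR'pos : ∀ v : ℝ, 1 ≤ v → 0 < R' v := fun v hv => lt_of_lt_of_le hR1pos (hR'ge v hv)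
  have hR'1pos : 0 < R' 1 := hR'pos 1 le_rfl
  have hRnn : ∀ v : ℝ, 0 ≤ v → 0 ≤ R v := by
    intro v hv
    refine hasSum_le (fun k => ?_) hasSum_zero (hR v)
    have := hp (k + 2); positivity
  -- 2 R v ≤ v * R' v
  have h2R : ∀ v : ℝ, 0 ≤ v → 2 * R v ≤ v * R' v := by
    intro v hv
    refine hasSum_le (fun k => ?_) ((hR v).mul_left 2) ((hR' v).mul_left v)
    have heq : v * ((k + 2 : ℝ) * p (k + 2) * v ^ (k + 1)) = (k + 2 : ℝ) * p (k + 2) * v ^ (k + 2) := by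
      ring
    rw [heq]
    have hpk := hp (k + 2)
    have hvp : (0 : ℝ) ≤ v ^ (k + 2) := pow_nonneg hv _
    nlinarith [hvp, hpk, mul_nonneg (mul_nonneg (Nat.cast_nonneg (α := ℝ) k) hpk) hvp]
  have hClt : p 0 / (1 - p 1) < 1 := (div_lt_one h1p1).2 (by linarith)
  -- Part 1 : 1 < f 1
  have part1 : 1 < f 1 := by
    rw [hf 1]
    have hsub' : R' 1 < 1 - p 1 := by linarith
    have h2 : R 1 / (1 - p 1) < R 1 / R' 1 :=
      div_lt_div_of_pos_left hR1pos hR'1pos hsub'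
    have h3 : p 0 / (1 - p 1) + R 1 / (1 - p 1) = 1 := by
      rw [← add_div, hR1]
      rw [show p 0 + (1 - (p 0 + p 1)) = 1 - p 1 by ring, div_self (ne_of_gt h1p1)]
    linarith
  -- Part 2 : f v < v for v ≥ 2
  have part2 : ∀ v : ℝ, 2 ≤ v → f v < v := by
    intro v hv
    rw [hf v]
    have hv1 : (1 : ℝ) ≤ v := by linarith
    have hR'v := hR'pos v hv1
    have hdiv : R v / R' v ≤ v / 2 := by
      rw [div_le_div_iff₀ hR'v (by norm_num : (0:ℝ) < 2)]
      linarith [h2R v (by linarith)]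
    linarith
  refine ⟨part1, ⟨2, part2⟩, ?_⟩
  -- Part 3 : fixed point via IVT on [1, 2]
  -- continuity of R and R' on Icc 1 2
  have hsumR2 : Summable (fun k : ℕ => p (k + 2) * (2 : ℝ) ^ (k + 2)) := (hR 2).summable
  have hsumR'2 : Summable (fun k : ℕ => (k + 2 : ℝ) * p (k + 2) * (2 : ℝ) ^ (k + 1)) :=
    (hR' 2).summable
  have hRcont : ContinuousOn R (Set.Icc (1 : ℝ) 2) := by
    have : ContinuousOn (fun v : ℝ => ∑' k : ℕ, p (k + 2) * v ^ (k + 2)) (Set.Icc (1 : ℝ) 2) := by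
      refine continuousOn_tsum (fun k => (Continuous.continuousOn (by continuity))) hsumR2
        (fun k x hx => ?_)
      have hx0 : (0 : ℝ) ≤ x := le_trans zero_le_one hx.1
      have hxp : x ^ (k + 2) ≤ (2 : ℝ) ^ (k + 2) := pow_le_pow_left₀ hx0 hx.2 _
      have hpk := hp (k + 2)
      rw [Real.norm_eq_abs, abs_of_nonneg (by positivity)]
      exact mul_le_mul_of_nonneg_left hxp hpk
    exact this.congr (fun v _ => ((hR v).tsum_eq).symm)
  have hR'cont : ContinuousOn R' (Set.Icc (1 : ℝ) 2) := by
    have : ContinuousOn (fun v : ℝ => ∑' k : ℕ, (k + 2 : ℝ) * p (k + 2) * v ^ (k + 1))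
        (Set.Icc (1 : ℝ) 2) := by
      refine continuousOn_tsum (fun k => (Continuous.continuousOn (by continuity))) hsumR'2
        (fun k x hx => ?_)
      have hx0 : (0 : ℝ) ≤ x := le_trans zero_le_one hx.1
      have hxp : x ^ (k + 1) ≤ (2 : ℝ) ^ (k + 1) := pow_le_pow_left₀ hx0 hx.2 _
      have hpk := hp (k + 2)
      have hk2 : (0 : ℝ) ≤ (k + 2 : ℝ) * p (k + 2) := by positivity
      rw [Real.norm_eq_abs, abs_of_nonneg (by positivity)]
      exact mul_le_mul_of_nonneg_left hxp hk2
    exact this.congr (fun v _ => ((hR' v).tsum_eq).symm)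
  have hfcont : ContinuousOn f (Set.Icc (1 : ℝ) 2) := by
    have : ContinuousOn (fun v => p 0 / (1 - p 1) + R v / R' v) (Set.Icc (1 : ℝ) 2) := by
      refine ContinuousOn.add continuousOn_const (ContinuousOn.div hRcont hR'cont ?_)
      intro x hx
      exact ne_of_gt (hR'pos x hx.1)
    exact this.congr (fun v _ => hf v)
  have hgcont : ContinuousOn (fun v => v - f v) (Set.Icc (1 : ℝ) 2) :=
    (continuousOn_id).sub hfcont
  have hmem : (0 : ℝ) ∈ Set.Icc ((fun v => v - f v) 1) ((fun v => v - f v) 2) := by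
    constructor
    · simp only; linarith
    · simp only; linarith [part2 2 le_rfl]
  have := intermediate_value_Icc (by norm_num : (1 : ℝ) ≤ 2) hgcont hmem
  obtain ⟨vc, hvc, hvc0⟩ := this
  exact ⟨vc, hvc.1, by simp only at hvc0; linarith⟩
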